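/- The homomorphism Φ : GSp₄(ℚ) → GL(V), Φ(g) : Y ↦ g·Y·g⁻¹, has the following properties: det Φ(g) = 1 for every g ∈ GSp₄(ℚ); every ℚ-linear map T : V → V with q∘T = q and det T = 1 equals Φ(g) for some g ∈ GSp₄(ℚ); and Φ(g) = Φ(g′) iff g′ = λg for some λ ∈ ℚˣ. Hence Φ induces a group isomorphism GSp₄(ℚ)/ℚˣ·I₄ ≅ SO(V, q)(ℚ) (the ℚ-points version of the exceptional isomorphism PGSp₄ ≅ SO(V)). -/

import Mathlib

/-! STATEMENT 2: properties of Φ : GSp₄(ℚ) → GL(V), Φ(g) : Y ↦ g·Y·g⁻¹. -/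
open Matrix

noncomputable section

/-- The 4×4 matrix with 2×2 blocks `[[A, B], [C, D]]`. -/
def blk {R : Type*} (A B C D : Matrix (Fin 2) (Fin 2) R) : Matrix (Fin 4) (Fin 4) R :=
  !![A 0 0, A 0 1, B 0 0, B 0 1;
     A 1 0, A 1 1, B 1 0, B 1 1;
     C 0 0, C 0 1, D 0 0, D 0 1;
     C 1 0, C 1 1, D 1 0, D 1 1]

/-- `J₂ = [[0, I₂], [−I₂, 0]] ∈ M₄(ℚ)`. -/
def J2 : Matrix (Fin 4) (Fin 4) ℚ := blk 0 1 (-1) 0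

/-- Membership in `GSp₄(ℚ) = {g ∈ GL₄(ℚ) : gᵀ J₂ g = ν(g) J₂, ν(g) ∈ ℚˣ}`. -/
def IsGSp4 (g : Matrix (Fin 4) (Fin 4) ℚ) : Prop :=
  IsUnit g ∧ ∃ ν : ℚ, ν ≠ 0 ∧ gᵀ * J2 * g = ν • J2

/-- `w = [[0,1],[−1,0]] ∈ M₂(ℚ)`. -/
def wMat : Matrix (Fin 2) (Fin 2) ℚ := !![0, 1; -1, 0]

/-- Membership in the quadratic space
`V = {[[X, x′·w],[−x″·w, Xᵀ]] : x′, x″ ∈ ℚ, X ∈ M₂(ℚ), Tr X = 0}`. -/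
def memV (Y : Matrix (Fin 4) (Fin 4) ℚ) : Prop :=
  ∃ (X : Matrix (Fin 2) (Fin 2) ℚ) (x' x'' : ℚ),
    X.trace = 0 ∧ Y = blk X (x' • wMat) (-(x'' • wMat)) Xᵀ

/-- The quadratic form `q(Y) = (1/4)·Tr(Y²)`. -/
def qV (Y : Matrix (Fin 4) (Fin 4) ℚ) : ℚ := (1 / 4) * (Y * Y).trace

lemma blk_add {R : Type*} [AddCommMonoid R] (A B C D A' B' C' D' : Matrix (Fin 2) (Fin 2) R) :
    blk A B C D + blk A' B' C' D' = blk (A + A') (B + B') (C + C') (D + D') := by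
  ext i j
  fin_cases i <;> fin_cases j <;> simp [blk, Matrix.vecHead, Matrix.vecTail]

lemma blk_smul (c : ℚ) (A B C D : Matrix (Fin 2) (Fin 2) ℚ) :
    c • blk A B C D = blk (c • A) (c • B) (c • C) (c • D) := by
  ext i j
  fin_cases i <;> fin_cases j <;> simp [blk, Matrix.vecHead, Matrix.vecTail]

lemma blk_zero : blk (0 : Matrix (Fin 2) (Fin 2) ℚ) 0 0 0 = 0 := by
  ext i j
  fin_cases i <;> fin_cases j <;> simp [blk, Matrix.vecHead, Matrix.vecTail]

/-- `V`, as a ℚ-subspace of `M₄(ℚ)`. -/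
def Vsub : Submodule ℚ (Matrix (Fin 4) (Fin 4) ℚ) where
  carrier := {Y | memV Y}
  zero_mem' := ⟨0, 0, 0, by simp, by simp [blk_zero.symm]⟩
  add_mem' := by
    rintro Y Z ⟨X1, a1, b1, h1, rfl⟩ ⟨X2, a2, b2, h2, rfl⟩
    refine ⟨X1 + X2, a1 + a2, b1 + b2, by simp [h1, h2], ?_⟩
    rw [blk_add]; simp [add_smul, neg_add, Matrix.transpose_add, add_comm]
  smul_mem' := by
    rintro c Y ⟨X1, a1, b1, h1, rfl⟩
    refine ⟨c • X1, c * a1, c * b1, by simp [h1], ?_⟩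
    rw [blk_smul]; simp [smul_smul, smul_neg, Matrix.transpose_smul]

/-! ## Auxiliary development -/

/-- Explicit parametrization of elements of `V`. -/
def mk5 (a b c s t : ℚ) : Matrix (Fin 4) (Fin 4) ℚ :=
  !![a, b, 0, s; c, -a, -s, 0; 0, -t, a, c; t, 0, b, -a]

lemma memV_mk5 (a b c s t : ℚ) : memV (mk5 a b c s t) := by
  refine ⟨!![a, b; c, -a], s, t, by simp [Matrix.trace_fin_two], ?_⟩
  ext i j
  fin_cases i <;> fin_cases j <;> simp [mk5, blk, wMat]

lemma memV_eq_mk5 {Y : Matrix (Fin 4) (Fin 4) ℚ} (hY : memV Y) :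
    Y = mk5 (Y 0 0) (Y 0 1) (Y 1 0) (Y 0 3) (Y 3 0) := by
  obtain ⟨X, s, t, hX, rfl⟩ := hY
  have h11 : X 1 1 = - X 0 0 := by
    simp [Matrix.trace_fin_two] at hX; linarith
  ext i j
  fin_cases i <;> fin_cases j <;> simp [blk, mk5, wMat, h11]

lemma J2_eq : J2 = !![0,0,1,0; 0,0,0,1; -1,0,0,0; 0,-1,0,0] := by
  ext i j
  fin_cases i <;> fin_cases j <;> simp [J2, blk, Matrix.vecHead, Matrix.vecTail]
lemma qV_mk5 (a b c s t : ℚ) : qV (mk5 a b c s t) = a^2 + b*c + s*t := by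
  simp [qV, mk5, Matrix.trace, Matrix.diag, Fin.sum_univ_four, Matrix.mul_apply,
    Matrix.vecHead, Matrix.vecTail]
  ring

lemma sq_mk5 (a b c s t : ℚ) :
    mk5 a b c s t * mk5 a b c s t = (a^2 + b*c + s*t) • (1 : Matrix (Fin 4) (Fin 4) ℚ) := by
  ext i j
  fin_cases i <;> fin_cases j <;>
    simp [mk5, Matrix.mul_apply, Fin.sum_univ_four, Matrix.one_apply,
      Matrix.vecHead, Matrix.vecTail] <;> ring

lemma symp_mk5 (a b c s t : ℚ) :
    (mk5 a b c s t)ᵀ * J2 * mk5 a b c s t = (a^2 + b*c + s*t) • J2 := by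
  rw [J2_eq]
  ext i j
  fin_cases i <;> fin_cases j <;>
    simp [mk5, Matrix.mul_apply, Fin.sum_univ_four, Matrix.transpose_apply,
      Matrix.vecHead, Matrix.vecTail] <;> ring
lemma commutant_scalar (h : Matrix (Fin 4) (Fin 4) ℚ)
    (hc : ∀ Y, memV Y → h * Y = Y * h) : h = h 0 0 • 1 := by
  have Ea := hc (mk5 1 0 0 0 0) (memV_mk5 1 0 0 0 0)
  have Eb := hc (mk5 0 1 0 0 0) (memV_mk5 0 1 0 0 0)
  have Ec := hc (mk5 0 0 1 0 0) (memV_mk5 0 0 1 0 0)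
  have Es := hc (mk5 0 0 0 1 0) (memV_mk5 0 0 0 1 0)
  have e1 := congrFun (congrFun Ea 0) 1
  have e2 := congrFun (congrFun Ea 0) 3
  have e3 := congrFun (congrFun Ea 1) 0
  have e4 := congrFun (congrFun Ea 1) 2
  have e5 := congrFun (congrFun Ea 2) 1
  have e6 := congrFun (congrFun Ea 2) 3
  have e7 := congrFun (congrFun Ea 3) 0
  have e8 := congrFun (congrFun Ea 3) 2
  have e9 := congrFun (congrFun Ec 0) 3
  have e10 := congrFun (congrFun Eb 0) 3
  have e11 := congrFun (congrFun Eb 3) 0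
  have e12 := congrFun (congrFun Ec 3) 0
  have e13 := congrFun (congrFun Eb 0) 1
  have e14 := congrFun (congrFun Es 1) 2
  have e15 := congrFun (congrFun Ec 2) 3
  simp [mk5, Matrix.mul_apply, Matrix.vecMul, dotProduct, Fin.sum_univ_four, Matrix.vecHead, Matrix.vecTail] at e1 e2 e3 e4 e5 e6 e7 e8 e9 e10 e11 e12 e13 e14 e15
  ext i j
  fin_cases i <;> fin_cases j <;>
    simp [Matrix.one_apply, Matrix.smul_apply] <;> linarith

lemma anticommutant_zero (h : Matrix (Fin 4) (Fin 4) ℚ)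
    (hc : ∀ Y, memV Y → h * Y = -(Y * h)) : h = 0 := by
  have Ea := hc (mk5 1 0 0 0 0) (memV_mk5 1 0 0 0 0)
  have Eb := hc (mk5 0 1 0 0 0) (memV_mk5 0 1 0 0 0)
  have Ec := hc (mk5 0 0 1 0 0) (memV_mk5 0 0 1 0 0)
  have Es := hc (mk5 0 0 0 1 0) (memV_mk5 0 0 0 1 0)
  have Et := hc (mk5 0 0 0 0 1) (memV_mk5 0 0 0 0 1)
  have e1 := congrFun (congrFun Ea 0) 0
  have e2 := congrFun (congrFun Ea 0) 2
  have e3 := congrFun (congrFun Ea 1) 1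
  have e4 := congrFun (congrFun Ea 1) 3
  have e5 := congrFun (congrFun Ea 2) 0
  have e6 := congrFun (congrFun Ea 2) 2
  have e7 := congrFun (congrFun Ea 3) 1
  have e8 := congrFun (congrFun Ea 3) 3
  have e9 := congrFun (congrFun Ec 0) 0
  have e10 := congrFun (congrFun Et 0) 0
  have e11 := congrFun (congrFun Eb 0) 0
  have e12 := congrFun (congrFun Et 1) 1
  have e13 := congrFun (congrFun Es 1) 1
  have e14 := congrFun (congrFun Eb 3) 3
  have e15 := congrFun (congrFun Es 3) 3
  have e16 := congrFun (congrFun Ec 3) 3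
  simp [mk5, Matrix.mul_apply, Matrix.vecMul, dotProduct, Fin.sum_univ_four, Matrix.vecHead, Matrix.vecTail] at e1 e2 e3 e4 e5 e6 e7 e8 e9 e10 e11 e12 e13 e14 e15 e16
  ext i j
  fin_cases i <;> fin_cases j <;> simp <;> linarith
/-- The symmetric bilinear form associated to `qV` (entrywise formula). -/
def BB (Y Z : Matrix (Fin 4) (Fin 4) ℚ) : ℚ :=
  2 * (Y 0 0) * (Z 0 0) + (Y 0 1) * (Z 1 0) + (Y 1 0) * (Z 0 1)
    + (Y 0 3) * (Z 3 0) + (Y 3 0) * (Z 0 3)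

lemma BB_comm (Y Z : Matrix (Fin 4) (Fin 4) ℚ) : BB Y Z = BB Z Y := by
  simp [BB]; ring

lemma BB_add_left (Y Y' Z : Matrix (Fin 4) (Fin 4) ℚ) :
    BB (Y + Y') Z = BB Y Z + BB Y' Z := by simp [BB]; ring

lemma BB_sub_left (Y Y' Z : Matrix (Fin 4) (Fin 4) ℚ) :
    BB (Y - Y') Z = BB Y Z - BB Y' Z := by simp [BB]; ring

lemma BB_smul_left (c : ℚ) (Y Z : Matrix (Fin 4) (Fin 4) ℚ) :
    BB (c • Y) Z = c * BB Y Z := by simp [BB]; ring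

lemma BB_mk5 (a b c s t a' b' c' s' t' : ℚ) :
    BB (mk5 a b c s t) (mk5 a' b' c' s' t') = 2*a*a' + b*c' + c*b' + s*t' + t*s' := by
  simp [BB, mk5]

lemma mk5_add (a b c s t a' b' c' s' t' : ℚ) :
    mk5 a b c s t + mk5 a' b' c' s' t' = mk5 (a+a') (b+b') (c+c') (s+s') (t+t') := by
  ext i j; fin_cases i <;> fin_cases j <;> simp [mk5] <;> ring

lemma mk5_smul (k a b c s t : ℚ) :
    k • mk5 a b c s t = mk5 (k*a) (k*b) (k*c) (k*s) (k*t) := by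
  ext i j; fin_cases i <;> fin_cases j <;> simp [mk5] <;> ring

lemma clifford_mk5 (a b c s t a' b' c' s' t' : ℚ) :
    mk5 a b c s t * mk5 a' b' c' s' t' + mk5 a' b' c' s' t' * mk5 a b c s t
      = (2*a*a' + b*c' + c*b' + s*t' + t*s') • (1 : Matrix (Fin 4) (Fin 4) ℚ) := by
  have h1 := sq_mk5 (a+a') (b+b') (c+c') (s+s') (t+t')
  rw [← mk5_add, mul_add, add_mul, add_mul, sq_mk5, sq_mk5] at h1
  have h2 : mk5 a b c s t * mk5 a' b' c' s' t' + mk5 a' b' c' s' t' * mk5 a b c s t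
      = ((a+a')^2 + (b+b')*(c+c') + (s+s')*(t+t')
          - (a^2 + b*c + s*t) - (a'^2 + b'*c' + s'*t')) • (1 : Matrix (Fin 4) (Fin 4) ℚ) := by
    rw [sub_smul, sub_smul, ← h1]; abel
  rw [h2]; congr 1; ring

/-- Clifford identity on `V`: `Y Z + Z Y = B(Y,Z)·1`. -/
lemma cliffordV {Y Z : Matrix (Fin 4) (Fin 4) ℚ} (hY : memV Y) (hZ : memV Z) :
    Y * Z + Z * Y = BB Y Z • (1 : Matrix (Fin 4) (Fin 4) ℚ) := by
  rw [memV_eq_mk5 hY, memV_eq_mk5 hZ, clifford_mk5, BB_mk5]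

lemma qV_entries {Y : Matrix (Fin 4) (Fin 4) ℚ} (hY : memV Y) :
    qV Y = (Y 0 0)^2 + (Y 0 1)*(Y 1 0) + (Y 0 3)*(Y 3 0) := by
  conv_lhs => rw [memV_eq_mk5 hY]
  rw [qV_mk5]

/-- `Y² = q(Y)·1` on `V`. -/
lemma sqV {Y : Matrix (Fin 4) (Fin 4) ℚ} (hY : memV Y) :
    Y * Y = qV Y • (1 : Matrix (Fin 4) (Fin 4) ℚ) := by
  conv_lhs => rw [memV_eq_mk5 hY]
  rw [sq_mk5, ← qV_mk5, ← memV_eq_mk5 hY]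

lemma BB_self {Y : Matrix (Fin 4) (Fin 4) ℚ} (hY : memV Y) : BB Y Y = 2 * qV Y := by
  rw [qV_entries hY]; simp [BB]; ring

lemma qV_polar {Y Z : Matrix (Fin 4) (Fin 4) ℚ} (hY : memV Y) (hZ : memV Z) :
    qV (Y + Z) = qV Y + qV Z + BB Y Z := by
  rw [memV_eq_mk5 hY, memV_eq_mk5 hZ, mk5_add, qV_mk5, qV_mk5, qV_mk5, BB_mk5]; ring

lemma qV_smul (c : ℚ) (Y : Matrix (Fin 4) (Fin 4) ℚ) : qV (c • Y) = c^2 * qV Y := by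
  simp [qV, smul_mul_assoc, Matrix.mul_smul, Matrix.trace_smul, smul_smul, smul_eq_mul]
  ring

/-- The coordinate map `V → ℚ⁵`. -/
def coordV : ↥Vsub →ₗ[ℚ] (Fin 5 → ℚ) where
  toFun Y := ![Y.1 0 0, Y.1 0 1, Y.1 1 0, Y.1 0 3, Y.1 3 0]
  map_add' Y Z := by funext i; fin_cases i <;> simp
  map_smul' c Y := by funext i; fin_cases i <;> simp

/-- The parametrization `ℚ⁵ → V`. -/
def toV : (Fin 5 → ℚ) →ₗ[ℚ] ↥Vsub where
  toFun v := ⟨mk5 (v 0) (v 1) (v 2) (v 3) (v 4), memV_mk5 _ _ _ _ _⟩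
  map_add' v w := by
    apply Subtype.ext
    simp only [Submodule.coe_add]
    rw [mk5_add]; simp
  map_smul' c v := by
    apply Subtype.ext
    simp only [SetLike.val_smul, RingHom.id_apply]
    rw [mk5_smul]; simp

lemma coordV_toV (v : Fin 5 → ℚ) : coordV (toV v) = v := by
  funext i; fin_cases i <;> simp [coordV, toV, mk5]

lemma toV_coordV (Y : ↥Vsub) : toV (coordV Y) = Y := by
  apply Subtype.ext
  simp only [toV, coordV, LinearMap.coe_mk, AddHom.coe_mk]
  exact (memV_eq_mk5 Y.2).symm

/-- `V ≅ ℚ⁵`. -/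
def equivV : (Fin 5 → ℚ) ≃ₗ[ℚ] ↥Vsub :=
  LinearEquiv.ofLinear toV coordV
    (by apply LinearMap.ext; intro Y; simp [toV_coordV])
    (by apply LinearMap.ext; intro v; simp [coordV_toV])

/-- A basis of `V` indexed by `Fin 5`. -/
def basisV : Module.Basis (Fin 5) ℚ ↥Vsub := Module.Basis.ofEquivFun equivV.symm

lemma basisV_apply (i : Fin 5) : basisV i = toV (Pi.single i 1) := by
  simp [basisV, Module.Basis.ofEquivFun, equivV]
/-- The linear functional `Y ↦ B(Y,u)` on `V`. -/
def BBl (u : ↥Vsub) : ↥Vsub →ₗ[ℚ] ℚ where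
  toFun Y := BB Y.1 u.1
  map_add' Y Z := by simp [BB]; ring
  map_smul' c Y := by simp [BB]; ring

/-- The reflection of `V` in the hyperplane orthogonal to `u`. -/
def reflL (u : ↥Vsub) : ↥Vsub →ₗ[ℚ] ↥Vsub :=
  LinearMap.id - (qV u.1)⁻¹ • (BBl u).smulRight u

lemma reflL_apply (u Y : ↥Vsub) :
    reflL u Y = Y - ((qV u.1)⁻¹ * BB Y.1 u.1) • u := by
  simp [reflL, BBl, smul_smul]

lemma reflL_coe (u Y : ↥Vsub) :
    (reflL u Y : Matrix (Fin 4) (Fin 4) ℚ)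
      = Y.1 - ((qV u.1)⁻¹ * BB Y.1 u.1) • u.1 := by
  rw [reflL_apply]; rfl

lemma reflL_qV (u Y : ↥Vsub) (hu : qV u.1 ≠ 0) :
    qV (reflL u Y : Matrix (Fin 4) (Fin 4) ℚ) = qV Y.1 := by
  rw [reflL_coe]
  have h : Y.1 - ((qV u.1)⁻¹ * BB Y.1 u.1) • u.1
      = Y.1 + (-((qV u.1)⁻¹ * BB Y.1 u.1)) • u.1 := by
    rw [neg_smul, sub_eq_add_neg]
  rw [h, qV_polar Y.2 (Submodule.smul_mem _ _ u.2), qV_smul]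
  have hBB : BB Y.1 ((-((qV u.1)⁻¹ * BB Y.1 u.1)) • u.1)
      = -((qV u.1)⁻¹ * BB Y.1 u.1) * BB Y.1 u.1 := by
    rw [BB_comm, BB_smul_left, BB_comm]
  rw [hBB]
  field_simp
  ring

lemma reflL_fix (u Y : ↥Vsub) (h : BB Y.1 u.1 = 0) : reflL u Y = Y := by
  rw [reflL_apply, h]; simp

lemma reflL_invol (u : ↥Vsub) (hu : qV u.1 ≠ 0) (Y : ↥Vsub) :
    reflL u (reflL u Y) = Y := by
  rw [reflL_apply, reflL_apply]
  have h1 : BB (Y - ((qV u.1)⁻¹ * BB Y.1 u.1) • u : ↥Vsub).1 u.1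
      = BB Y.1 u.1 - ((qV u.1)⁻¹ * BB Y.1 u.1) * BB u.1 u.1 := by
    push_cast
    rw [BB_sub_left, BB_smul_left]
  rw [h1, BB_self u.2]
  have h2 : (qV u.1)⁻¹ * (BB Y.1 u.1 - (qV u.1)⁻¹ * BB Y.1 u.1 * (2 * qV u.1))
      = -((qV u.1)⁻¹ * BB Y.1 u.1) := by
    field_simp; ring
  rw [h2]
  ext1
  push_cast
  module

lemma inv_of_memV {u : Matrix (Fin 4) (Fin 4) ℚ} (hu : memV u) (hq : qV u ≠ 0) :
    u⁻¹ = (qV u)⁻¹ • u := by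
  apply Matrix.inv_eq_right_inv
  rw [Matrix.mul_smul, sqV hu, smul_smul, inv_mul_cancel₀ hq, one_smul]

lemma isUnit_of_memV {u : Matrix (Fin 4) (Fin 4) ℚ} (hu : memV u) (hq : qV u ≠ 0) :
    IsUnit u := by
  apply (Matrix.isUnit_iff_isUnit_det u).2
  have h : u * ((qV u)⁻¹ • u) = 1 := by
    rw [Matrix.mul_smul, sqV hu, smul_smul, inv_mul_cancel₀ hq, one_smul]
  have := congrArg Matrix.det h
  rw [Matrix.det_mul, Matrix.det_one] at this
  exact IsUnit.of_mul_eq_one _ this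

lemma isGSp4_of_memV {u : Matrix (Fin 4) (Fin 4) ℚ} (hu : memV u) (hq : qV u ≠ 0) :
    IsGSp4 u := by
  refine ⟨isUnit_of_memV hu hq, qV u, hq, ?_⟩
  conv_lhs => rw [memV_eq_mk5 hu]
  rw [symp_mk5, ← qV_mk5, ← memV_eq_mk5 hu]

/-- Reflection is conjugation (up to sign) by `u` itself. -/
lemma reflL_conj (u : ↥Vsub) (hu : qV u.1 ≠ 0) (Y : ↥Vsub) :
    (reflL u Y : Matrix (Fin 4) (Fin 4) ℚ)
      = -(u.1 * Y.1 * (u.1)⁻¹) := by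
  rw [inv_of_memV u.2 hu, reflL_coe]
  have hcl : u.1 * Y.1 = BB u.1 Y.1 • 1 - Y.1 * u.1 := by
    have := cliffordV u.2 Y.2
    linear_combination (norm := abel) this
  have h2 : u.1 * Y.1 * u.1 = BB u.1 Y.1 • u.1 - qV u.1 • Y.1 := by
    rw [hcl, Matrix.sub_mul, Matrix.smul_mul, Matrix.one_mul, Matrix.mul_assoc, sqV u.2,
      Matrix.mul_smul, Matrix.mul_one]
  rw [Matrix.mul_smul, h2, smul_sub, smul_smul, smul_smul, inv_mul_cancel₀ hu, one_smul,
    neg_sub, BB_comm u.1 Y.1]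
lemma BB_add_right (Y Z Z' : Matrix (Fin 4) (Fin 4) ℚ) :
    BB Y (Z + Z') = BB Y Z + BB Y Z' := by simp [BB]; ring

lemma BB_sub_right (Y Z Z' : Matrix (Fin 4) (Fin 4) ℚ) :
    BB Y (Z - Z') = BB Y Z - BB Y Z' := by simp [BB]; ring

lemma BB_neg_left (Y Z : Matrix (Fin 4) (Fin 4) ℚ) : BB (-Y) Z = -BB Y Z := by
  simp [BB]; ring

lemma qV_sub' {Y Z : Matrix (Fin 4) (Fin 4) ℚ} (hY : memV Y) (hZ : memV Z) :
    qV (Y - Z) = qV Y + qV Z - BB Y Z := by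
  have h : Y - Z = Y + (-1 : ℚ) • Z := by rw [neg_one_smul, ← sub_eq_add_neg]
  rw [h, qV_polar hY (Submodule.smul_mem Vsub _ hZ), qV_smul, BB_comm, BB_smul_left, BB_comm]
  ring

/-- Anisotropic vectors of `V`. -/
abbrev RV : Type := {u : ↥Vsub // qV (u.1 : Matrix (Fin 4) (Fin 4) ℚ) ≠ 0}

/-- Product of the reflections attached to a list of anisotropic vectors. -/
def reflP (L : List RV) : ↥Vsub →ₗ[ℚ] ↥Vsub := (L.map fun u => reflL u.1).prod

lemma reflP_nil : reflP [] = LinearMap.id := rfl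

lemma reflP_cons (u : RV) (L : List RV) :
    reflP (u :: L) = (reflL u.1).comp (reflP L) := by
  simp [reflP, List.prod_cons, Module.End.mul_eq_comp]

lemma reflP_append (L₁ L₂ : List RV) :
    reflP (L₁ ++ L₂) = (reflP L₁).comp (reflP L₂) := by
  simp [reflP, List.prod_append, Module.End.mul_eq_comp]

lemma reflP_qV (L : List RV) (Y : ↥Vsub) :
    qV ((reflP L Y : Matrix (Fin 4) (Fin 4) ℚ)) = qV Y.1 := by
  induction L with
  | nil => rfl
  | cons u L ih =>
    rw [reflP_cons, LinearMap.comp_apply, reflL_qV _ _ u.2, ih]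

lemma reflP_invol (L : List RV) (Y : ↥Vsub) :
    reflP L.reverse (reflP L Y) = Y := by
  induction L generalizing Y with
  | nil => rfl
  | cons u L ih =>
    rw [reflP_cons, List.reverse_cons, reflP_append, LinearMap.comp_apply,
      LinearMap.comp_apply]
    have h1 : reflP [u] (reflL u.1 (reflP L Y)) = reflP L Y := by
      rw [reflP_cons, reflP_nil, LinearMap.comp_apply, LinearMap.id_apply,
        reflL_invol _ u.2]
    rw [h1, ih]

lemma BB_of_qV_pres (S : ↥Vsub →ₗ[ℚ] ↥Vsub) (hS : ∀ Y, qV ((S Y : Matrix (Fin 4) (Fin 4) ℚ)) = qV Y.1)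
    (Y Z : ↥Vsub) : BB (S Y : Matrix (Fin 4) (Fin 4) ℚ) (S Z : Matrix (Fin 4) (Fin 4) ℚ) = BB Y.1 Z.1 := by
  have h1 := qV_polar (S Y).2 (S Z).2
  have h2 : ((S Y : Matrix (Fin 4) (Fin 4) ℚ)) + (S Z : Matrix (Fin 4) (Fin 4) ℚ)
      = ((S (Y + Z) : Matrix (Fin 4) (Fin 4) ℚ)) := by rw [map_add]; rfl
  rw [h2, hS] at h1
  have h3 := qV_polar Y.2 Z.2
  have h4 : ((Y + Z : ↥Vsub) : Matrix (Fin 4) (Fin 4) ℚ) = Y.1 + Z.1 := rfl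
  rw [h4] at h1
  have h5 := hS Y
  have h6 := hS Z
  linarith [h1, h3]

/-- Two-reflection transitivity on vectors of equal nonzero length. -/
lemma two_refl (x y : ↥Vsub) (hq : qV x.1 = qV y.1) (hy : qV y.1 ≠ 0) :
    ∃ L : List RV, reflP L x = y ∧
      ∀ z : ↥Vsub, BB z.1 x.1 = 0 → BB z.1 y.1 = 0 → reflP L z = z := by
  by_cases h1 : qV ((y - x : ↥Vsub) : Matrix (Fin 4) (Fin 4) ℚ) ≠ 0
  · refine ⟨[⟨y - x, h1⟩], ?_, ?_⟩
    · rw [reflP_cons, reflP_nil, LinearMap.comp_apply, LinearMap.id_apply, reflL_apply]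
      have hco : ((y - x : ↥Vsub) : Matrix (Fin 4) (Fin 4) ℚ) = y.1 - x.1 := rfl
      have hBB : BB x.1 ((y - x : ↥Vsub) : Matrix (Fin 4) (Fin 4) ℚ)
          = -(qV ((y - x : ↥Vsub) : Matrix (Fin 4) (Fin 4) ℚ)) := by
        rw [hco, BB_sub_right, qV_sub' y.2 x.2, BB_self x.2, BB_comm y.1 x.1]
        linarith
      rw [hBB]
      have hcoef : (qV ((y - x : ↥Vsub) : Matrix (Fin 4) (Fin 4) ℚ))⁻¹
          * -(qV ((y - x : ↥Vsub) : Matrix (Fin 4) (Fin 4) ℚ)) = -1 := by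
        rw [mul_neg, inv_mul_cancel₀ h1]
      rw [hcoef]
      ext1; push_cast; module
    · intro z hzx hzy
      rw [reflP_cons, reflP_nil, LinearMap.comp_apply, LinearMap.id_apply]
      apply reflL_fix
      have hco : ((y - x : ↥Vsub) : Matrix (Fin 4) (Fin 4) ℚ) = y.1 - x.1 := rfl
      rw [hco, BB_sub_right, hzx, hzy, sub_zero]
  · push_neg at h1
    have hco : ((y - x : ↥Vsub) : Matrix (Fin 4) (Fin 4) ℚ) = y.1 - x.1 := rfl
    have hco' : ((y + x : ↥Vsub) : Matrix (Fin 4) (Fin 4) ℚ) = y.1 + x.1 := rfl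
    have hBByx : BB y.1 x.1 = 2 * qV y.1 := by
      rw [hco, qV_sub' y.2 x.2] at h1
      linarith
    have h2 : qV ((y + x : ↥Vsub) : Matrix (Fin 4) (Fin 4) ℚ) ≠ 0 := by
      rw [hco', qV_polar y.2 x.2, hBByx]
      intro hcon
      apply hy
      linarith
    refine ⟨[⟨y, hy⟩, ⟨y + x, h2⟩], ?_, ?_⟩
    · rw [reflP_cons, reflP_cons, reflP_nil, LinearMap.comp_apply, LinearMap.comp_apply,
        LinearMap.id_apply]
      have hstep1 : reflL (y + x) x = -y := by
        rw [reflL_apply]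
        have hBB : BB x.1 ((y + x : ↥Vsub) : Matrix (Fin 4) (Fin 4) ℚ)
            = qV ((y + x : ↥Vsub) : Matrix (Fin 4) (Fin 4) ℚ) := by
          rw [hco', BB_add_right, BB_self x.2, qV_polar y.2 x.2, hBByx, BB_comm x.1 y.1, hBByx]
          try linarith
        rw [hBB, inv_mul_cancel₀ h2]
        ext1; push_cast; module
      rw [hstep1, reflL_apply]
      have hBB2 : BB ((-y : ↥Vsub) : Matrix (Fin 4) (Fin 4) ℚ) y.1 = -(2 * qV y.1) := by
        have : ((-y : ↥Vsub) : Matrix (Fin 4) (Fin 4) ℚ) = -(y.1) := rfl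
        rw [this, BB_neg_left, BB_self y.2]
      rw [hBB2]
      have hcoef : (qV y.1)⁻¹ * -(2 * qV y.1) = -2 := by field_simp <;> try ring
      rw [hcoef]
      ext1; push_cast; module
    · intro z hzx hzy
      rw [reflP_cons, reflP_cons, reflP_nil, LinearMap.comp_apply, LinearMap.comp_apply,
        LinearMap.id_apply]
      have hA : reflL (y + x) z = z := by
        apply reflL_fix
        rw [hco', BB_add_right, hzx, hzy, add_zero]
      rw [hA]
      exact reflL_fix _ _ hzy

/-- An orthogonal anisotropic basis of `V`. -/
def epsV : Fin 5 → ↥Vsub :=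
  ![⟨mk5 1 0 0 0 0, memV_mk5 _ _ _ _ _⟩,
    ⟨mk5 0 1 1 0 0, memV_mk5 _ _ _ _ _⟩,
    ⟨mk5 0 1 (-1) 0 0, memV_mk5 _ _ _ _ _⟩,
    ⟨mk5 0 0 0 1 1, memV_mk5 _ _ _ _ _⟩,
    ⟨mk5 0 0 0 1 (-1), memV_mk5 _ _ _ _ _⟩]

lemma qV_eps (i : Fin 5) : qV ((epsV i : Matrix (Fin 4) (Fin 4) ℚ)) ≠ 0 := by
  fin_cases i <;> simp [epsV, qV_mk5] <;> norm_num

lemma BB_eps {i j : Fin 5} (hij : i ≠ j) :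
    BB ((epsV i : Matrix (Fin 4) (Fin 4) ℚ)) ((epsV j : Matrix (Fin 4) (Fin 4) ℚ)) = 0 := by
  fin_cases i <;> fin_cases j <;> simp_all [epsV, BB_mk5] <;> norm_num

lemma mk5dec1 : mk5 0 1 0 0 0 = (2⁻¹:ℚ) • (mk5 0 1 1 0 0 + mk5 0 1 (-1) 0 0) := by
  rw [mk5_add, mk5_smul]; norm_num

lemma mk5dec2 : mk5 0 0 1 0 0 = (2⁻¹:ℚ) • (mk5 0 1 1 0 0 - mk5 0 1 (-1) 0 0) := by
  have h : mk5 0 1 1 0 0 - mk5 0 1 (-1) 0 0 = mk5 0 1 1 0 0 + (-1:ℚ) • mk5 0 1 (-1) 0 0 := by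
    rw [neg_one_smul, ← sub_eq_add_neg]
  rw [h, mk5_smul, mk5_add, mk5_smul]; norm_num

lemma mk5dec3 : mk5 0 0 0 1 0 = (2⁻¹:ℚ) • (mk5 0 0 0 1 1 + mk5 0 0 0 1 (-1)) := by
  rw [mk5_add, mk5_smul]; norm_num

lemma mk5dec4 : mk5 0 0 0 0 1 = (2⁻¹:ℚ) • (mk5 0 0 0 1 1 - mk5 0 0 0 1 (-1)) := by
  have h : mk5 0 0 0 1 1 - mk5 0 0 0 1 (-1) = mk5 0 0 0 1 1 + (-1:ℚ) • mk5 0 0 0 1 (-1) := by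
    rw [neg_one_smul, ← sub_eq_add_neg]
  rw [h, mk5_smul, mk5_add, mk5_smul]; norm_num

lemma fix_eps_eq_id (F : ↥Vsub →ₗ[ℚ] ↥Vsub) (hF : ∀ i, F (epsV i) = epsV i) :
    F = LinearMap.id := by
  apply basisV.ext
  intro i
  fin_cases i
  · show F (basisV 0) = LinearMap.id (basisV 0)
    have he : basisV 0 = epsV 0 := by
      rw [basisV_apply]
      apply Subtype.ext
      show mk5 _ _ _ _ _ = _
      simp [epsV, Pi.single_apply]
    rw [he, hF, LinearMap.id_apply]
  · show F (basisV 1) = LinearMap.id (basisV 1)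
    have he : basisV 1 = (2⁻¹ : ℚ) • (epsV 1 + epsV 2) := by
      rw [basisV_apply]
      apply Subtype.ext
      show mk5 _ _ _ _ _ = _
      push_cast
      simp only [epsV, Matrix.cons_val_one, Matrix.head_cons, Matrix.cons_val_two,
        Matrix.tail_cons, Matrix.cons_val_zero]
      rw [← mk5dec1]
      simp [Pi.single_apply]
    rw [he]
    simp only [_root_.map_smul, map_add, hF, LinearMap.id_apply]
  · show F (basisV 2) = LinearMap.id (basisV 2)
    have he : basisV 2 = (2⁻¹ : ℚ) • (epsV 1 - epsV 2) := by
      rw [basisV_apply]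
      apply Subtype.ext
      show mk5 _ _ _ _ _ = _
      push_cast
      simp only [epsV, Matrix.cons_val_one, Matrix.head_cons, Matrix.cons_val_two,
        Matrix.tail_cons, Matrix.cons_val_zero]
      rw [← mk5dec2]
      simp [Pi.single_apply]
    rw [he]
    simp only [_root_.map_smul, map_sub, hF, LinearMap.id_apply]
  · show F (basisV 3) = LinearMap.id (basisV 3)
    have he : basisV 3 = (2⁻¹ : ℚ) • (epsV 3 + epsV 4) := by
      rw [basisV_apply]
      apply Subtype.ext
      show mk5 _ _ _ _ _ = _
      push_cast
      simp only [epsV, Matrix.cons_val_one, Matrix.head_cons, Matrix.cons_val_two,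
        Matrix.tail_cons, Matrix.cons_val_three, Matrix.cons_val_four]
      rw [← mk5dec3]
      simp [Pi.single_apply]
    rw [he]
    simp only [_root_.map_smul, map_add, hF, LinearMap.id_apply]
  · show F (basisV 4) = LinearMap.id (basisV 4)
    have he : basisV 4 = (2⁻¹ : ℚ) • (epsV 3 - epsV 4) := by
      rw [basisV_apply]
      apply Subtype.ext
      show mk5 _ _ _ _ _ = _
      push_cast
      simp only [epsV, Matrix.cons_val_one, Matrix.head_cons, Matrix.cons_val_two,
        Matrix.tail_cons, Matrix.cons_val_three, Matrix.cons_val_four]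
      rw [← mk5dec4]
      simp [Pi.single_apply]
    rw [he]
    simp only [_root_.map_smul, map_sub, hF, LinearMap.id_apply]

lemma CD_aux (T : ↥Vsub →ₗ[ℚ] ↥Vsub)
    (hT : ∀ Y : ↥Vsub, qV ((T Y : Matrix (Fin 4) (Fin 4) ℚ)) = qV Y.1) :
    ∀ k : ℕ, k ≤ 5 →
      ∃ L : List RV, ∀ i : Fin 5, (i : ℕ) < k → ((reflP L).comp T) (epsV i) = epsV i := by
  intro k
  induction k with
  | zero => intro _; exact ⟨[], by intro i h; omega⟩
  | succ k ih =>
    intro hk5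
    obtain ⟨L, hL⟩ := ih (by omega)
    set S := (reflP L).comp T with hS
    have hSq : ∀ Y : ↥Vsub, qV ((S Y : Matrix (Fin 4) (Fin 4) ℚ)) = qV Y.1 := by
      intro Y
      rw [hS, LinearMap.comp_apply, reflP_qV, hT]
    set κ : Fin 5 := ⟨k, by omega⟩ with hκ
    obtain ⟨L', hxy, hfix⟩ := two_refl (S (epsV κ)) (epsV κ) (hSq (epsV κ)) (qV_eps κ)
    refine ⟨L' ++ L, ?_⟩
    intro i hi
    have hcomp : ((reflP (L' ++ L)).comp T) (epsV i) = reflP L' (S (epsV i)) := by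
      rw [reflP_append]
      rfl
    rw [hcomp]
    by_cases hik : (i : ℕ) < k
    · rw [hL i hik]
      apply hfix
      · have h1 : BB ((epsV i : Matrix (Fin 4) (Fin 4) ℚ)) ((S (epsV κ) : Matrix (Fin 4) (Fin 4) ℚ))
            = BB ((S (epsV i) : Matrix (Fin 4) (Fin 4) ℚ)) ((S (epsV κ) : Matrix (Fin 4) (Fin 4) ℚ)) := by
          rw [hL i hik]
        rw [h1, BB_of_qV_pres S hSq]
        exact BB_eps (by intro h; rw [h] at hik; simp [hκ] at hik)
      · exact BB_eps (by intro h; rw [h] at hik; simp [hκ] at hik)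
    · have hik' : i = κ := by
        apply Fin.ext
        simp only [hκ]
        omega
      rw [hik']
      exact hxy

/-- Cartan–Dieudonné for `(V, qV)`: every isometry is a product of reflections. -/
lemma CD (T : ↥Vsub →ₗ[ℚ] ↥Vsub)
    (hT : ∀ Y : ↥Vsub, qV ((T Y : Matrix (Fin 4) (Fin 4) ℚ)) = qV Y.1) :
    ∃ L : List RV, T = reflP L := by
  obtain ⟨L, hL⟩ := CD_aux T hT 5 le_rfl
  have hid : (reflP L).comp T = LinearMap.id := by
    apply fix_eps_eq_id
    intro i
    exact hL i i.2
  refine ⟨L.reverse, ?_⟩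
  apply LinearMap.ext
  intro Y
  have h1 : reflP L (T Y) = Y := by
    have := congrArg (fun F => F Y) hid
    simpa using this
  have h2 := reflP_invol L (T Y)
  rw [h1] at h2
  exact h2.symm
lemma coordV_eq_repr (Y : ↥Vsub) (i : Fin 5) : basisV.repr Y i = coordV Y i := by
  simp only [basisV, Module.Basis.ofEquivFun_repr_apply, equivV, LinearEquiv.ofLinear_symm_apply]

lemma det_reflL (u : ↥Vsub) (hu : qV (u : Matrix (Fin 4) (Fin 4) ℚ) ≠ 0) :
    LinearMap.det (reflL u) = -1 := by
  rw [← LinearMap.det_toMatrix basisV]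
  have hM : LinearMap.toMatrix basisV basisV (reflL u)
      = 1 + Matrix.replicateCol (Fin 1) (fun i => -(coordV u i))
          * Matrix.replicateRow (Fin 1)
            (fun j => (qV u.1)⁻¹ * BB ((basisV j : Matrix (Fin 4) (Fin 4) ℚ)) u.1) := by
    ext i j
    rw [LinearMap.toMatrix_apply, reflL_apply, map_sub, _root_.map_smul]
    simp only [Matrix.add_apply, Matrix.one_apply, Matrix.mul_apply, Fin.sum_univ_one,
      Matrix.replicateCol_apply, Matrix.replicateRow_apply, Finsupp.coe_sub, Finsupp.coe_smul, Pi.sub_apply,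
      Pi.smul_apply, smul_eq_mul, coordV_eq_repr, Module.Basis.repr_self_apply]
    rcases eq_or_ne i j with h | h
    · subst h; simp; ring
    · simp [h, Ne.symm h]; ring
  rw [hM]
  refine (Matrix.det_one_add_replicateCol_mul_replicateRow (ι := Fin 1) _ _).trans ?_
  have hB0 : BB ((basisV 0 : Matrix (Fin 4) (Fin 4) ℚ)) u.1 = 2 * u.1 0 0 := by
    rw [basisV_apply]; simp [toV, BB, mk5, Pi.single_apply, Matrix.vecHead, Matrix.vecTail]
  have hB1 : BB ((basisV 1 : Matrix (Fin 4) (Fin 4) ℚ)) u.1 = u.1 1 0 := by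
    rw [basisV_apply]; simp [toV, BB, mk5, Pi.single_apply, Matrix.vecHead, Matrix.vecTail]
  have hB2 : BB ((basisV 2 : Matrix (Fin 4) (Fin 4) ℚ)) u.1 = u.1 0 1 := by
    rw [basisV_apply]; simp [toV, BB, mk5, Pi.single_apply, Matrix.vecHead, Matrix.vecTail]
  have hB3 : BB ((basisV 3 : Matrix (Fin 4) (Fin 4) ℚ)) u.1 = u.1 3 0 := by
    rw [basisV_apply]; simp [toV, BB, mk5, Pi.single_apply, Matrix.vecHead, Matrix.vecTail]
  have hB4 : BB ((basisV 4 : Matrix (Fin 4) (Fin 4) ℚ)) u.1 = u.1 0 3 := by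
    rw [basisV_apply]; simp [toV, BB, mk5, Pi.single_apply, Matrix.vecHead, Matrix.vecTail]
  rw [dotProduct]
  rw [Fin.sum_univ_five]
  rw [hB0, hB1, hB2, hB3, hB4]
  have hco : ∀ i, coordV u i = ![u.1 0 0, u.1 0 1, u.1 1 0, u.1 0 3, u.1 3 0] i := fun _ => rfl
  rw [hco 0, hco 1, hco 2, hco 3, hco 4]
  have hq := qV_entries u.2
  rw [hq] at hu ⊢
  simp only [Matrix.cons_val_zero, Matrix.cons_val_one, Matrix.head_cons,
    Matrix.cons_val_two, Matrix.tail_cons, Matrix.cons_val_three, Matrix.cons_val_four]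
  field_simp
  ring
lemma isGSp4_one : IsGSp4 1 := ⟨isUnit_one, 1, one_ne_zero, by simp⟩

lemma isGSp4_mul {g h : Matrix (Fin 4) (Fin 4) ℚ} (hg : IsGSp4 g) (hh : IsGSp4 h) :
    IsGSp4 (g * h) := by
  obtain ⟨hu, ν, hν, he⟩ := hg
  obtain ⟨hu', μ, hμ, he'⟩ := hh
  refine ⟨hu.mul hu', ν * μ, mul_ne_zero hν hμ, ?_⟩
  rw [Matrix.transpose_mul]
  calc hᵀ * gᵀ * J2 * (g * h) = hᵀ * (gᵀ * J2 * g) * h := by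
        simp only [Matrix.mul_assoc]
    _ = hᵀ * (ν • J2) * h := by rw [he]
    _ = ν • (hᵀ * J2 * h) := by
        rw [Matrix.mul_smul, Matrix.smul_mul]
    _ = ν • (μ • J2) := by rw [he']
    _ = (ν * μ) • J2 := by rw [smul_smul]

/-- The matrix product attached to a list of anisotropic vectors. -/
def matP (L : List RV) : Matrix (Fin 4) (Fin 4) ℚ :=
  (L.map fun u => (u.1 : Matrix (Fin 4) (Fin 4) ℚ)).prod

lemma matP_nil : matP [] = 1 := rfl

lemma matP_cons (u : RV) (L : List RV) :
    matP (u :: L) = (u.1 : Matrix (Fin 4) (Fin 4) ℚ) * matP L := by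
  simp [matP]

lemma isGSp4_matP (L : List RV) : IsGSp4 (matP L) := by
  induction L with
  | nil => exact isGSp4_one
  | cons u L ih =>
    rw [matP_cons]
    exact isGSp4_mul (isGSp4_of_memV u.1.2 u.2) ih

lemma reflP_conj (L : List RV) (Y : ↥Vsub) :
    (reflP L Y : Matrix (Fin 4) (Fin 4) ℚ)
      = ((-1 : ℚ))^(L.length) • (matP L * Y.1 * (matP L)⁻¹) := by
  induction L generalizing Y with
  | nil =>
    rw [reflP_nil, matP_nil, inv_one]
    simp
  | cons u L ih =>
    rw [reflP_cons, LinearMap.comp_apply, reflL_conj u.1 u.2, ih, matP_cons]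
    rw [Matrix.mul_inv_rev]
    have hlen : (u :: L).length = L.length + 1 := rfl
    rw [hlen, pow_succ]
    simp only [Matrix.mul_smul, Matrix.smul_mul, Matrix.mul_assoc]
    rw [← neg_smul]
    congr 1
    ring

lemma det_reflP (L : List RV) : LinearMap.det (reflP L) = (-1 : ℚ)^(L.length) := by
  induction L with
  | nil => rw [reflP_nil]; simp
  | cons u L ih =>
    rw [reflP_cons, LinearMap.det_comp, det_reflL u.1 u.2, ih]
    have hlen : (u :: L).length = L.length + 1 := rfl
    rw [hlen, pow_succ]
    ring

lemma qV_conj {g : Matrix (Fin 4) (Fin 4) ℚ} (hg : IsUnit g) (A : Matrix (Fin 4) (Fin 4) ℚ) :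
    qV (g * A * g⁻¹) = qV A := by
  have hdet := (Matrix.isUnit_iff_isUnit_det g).1 hg
  have hg1 : g⁻¹ * g = 1 := Matrix.nonsing_inv_mul g hdet
  have h1 : g * A * g⁻¹ * (g * A * g⁻¹) = g * (A * A) * g⁻¹ := by
    simp only [Matrix.mul_assoc]
    rw [← Matrix.mul_assoc g⁻¹ g, hg1, Matrix.one_mul]
  unfold qV
  rw [h1]
  congr 1
  rw [Matrix.trace_mul_comm (g * (A * A)) g⁻¹, ← Matrix.mul_assoc, hg1, Matrix.one_mul]

/-- det Φ(g) = 1 for all g ∈ GSp₄(ℚ); every ℚ-linear T : V → V with q∘T = q and det T = 1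
equals Φ(g) for some g ∈ GSp₄(ℚ); and Φ(g) = Φ(g′) iff g′ = λ·g for some λ ∈ ℚˣ.
Hence Φ induces a group isomorphism GSp₄(ℚ)/ℚˣ·I₄ ≅ SO(V, q)(ℚ). -/
theorem stmt2 :
    -- det Φ(g) = 1 : any linear self-map of V realizing Y ↦ g·Y·g⁻¹ has determinant 1
    (∀ g : Matrix (Fin 4) (Fin 4) ℚ, IsGSp4 g → ∀ T : ↥Vsub →ₗ[ℚ] ↥Vsub,
      (∀ Y : ↥Vsub, (T Y : Matrix (Fin 4) (Fin 4) ℚ) = g * (Y : Matrix (Fin 4) (Fin 4) ℚ) * g⁻¹) →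
      LinearMap.det T = 1) ∧
    -- surjectivity onto SO(V, q)(ℚ)
    (∀ T : ↥Vsub →ₗ[ℚ] ↥Vsub,
      (∀ Y : ↥Vsub, qV ((T Y : Matrix (Fin 4) (Fin 4) ℚ)) = qV (Y : Matrix (Fin 4) (Fin 4) ℚ)) →
      LinearMap.det T = 1 →
      ∃ g : Matrix (Fin 4) (Fin 4) ℚ, IsGSp4 g ∧
        ∀ Y : ↥Vsub, (T Y : Matrix (Fin 4) (Fin 4) ℚ) = g * (Y : Matrix (Fin 4) (Fin 4) ℚ) * g⁻¹) ∧
    -- Φ(g) = Φ(g′) iff g′ is a nonzero scalar multiple of g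
    (∀ g g' : Matrix (Fin 4) (Fin 4) ℚ, IsGSp4 g → IsGSp4 g' →
      ((∀ Y, memV Y → g * Y * g⁻¹ = g' * Y * g'⁻¹) ↔ ∃ lam : ℚ, lam ≠ 0 ∧ g' = lam • g)) := by
  refine ⟨?_, ?_, ?_⟩
  · -- Part 1
    intro g hg T hT
    have hdet := (Matrix.isUnit_iff_isUnit_det g).1 hg.1
    have hg1 : g⁻¹ * g = 1 := Matrix.nonsing_inv_mul g hdet
    have hTq : ∀ Y : ↥Vsub, qV ((T Y : Matrix (Fin 4) (Fin 4) ℚ)) = qV Y.1 := by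
      intro Y; rw [hT Y, qV_conj hg.1]
    obtain ⟨L, hL⟩ := CD T hTq
    have heven : Even L.length := by
      by_contra hodd
      have hOdd : Odd L.length := Nat.not_even_iff_odd.1 hodd
      set gl := matP L with hgl_def
      have hgl := isGSp4_matP L
      have hgl_det := (Matrix.isUnit_iff_isUnit_det gl).1 hgl.1
      have hgl1 : gl⁻¹ * gl = 1 := Matrix.nonsing_inv_mul gl hgl_det
      have hgl2 : gl * gl⁻¹ = 1 := Matrix.mul_nonsing_inv gl hgl_det
      have key : ∀ Y, memV Y → (gl⁻¹ * g) * Y = -(Y * (gl⁻¹ * g)) := by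
        intro Y hY
        have h1 : (T ⟨Y, hY⟩ : Matrix (Fin 4) (Fin 4) ℚ) = g * Y * g⁻¹ := hT _
        have h2 : (T ⟨Y, hY⟩ : Matrix (Fin 4) (Fin 4) ℚ)
            = ((-1:ℚ))^L.length • (gl * Y * gl⁻¹) := by
          rw [hL]; exact reflP_conj L _
        rw [hOdd.neg_one_pow, neg_one_smul] at h2
        have h3 : g * Y * g⁻¹ = -(gl * Y * gl⁻¹) := by rw [← h1, h2]
        calc (gl⁻¹ * g) * Y
            = gl⁻¹ * (g * Y * g⁻¹) * g := by
              simp only [Matrix.mul_assoc]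
              rw [hg1, Matrix.mul_one]
          _ = gl⁻¹ * -(gl * Y * gl⁻¹) * g := by rw [h3]
          _ = -(Y * (gl⁻¹ * g)) := by
              rw [Matrix.mul_neg, Matrix.neg_mul]
              congr 1
              simp only [Matrix.mul_assoc]
              rw [← Matrix.mul_assoc gl⁻¹ gl, hgl1, Matrix.one_mul]
      have hzero := anticommutant_zero _ key
      have h6 : (g⁻¹ * gl) * (gl⁻¹ * g) = 1 := by
        simp only [Matrix.mul_assoc]
        rw [← Matrix.mul_assoc gl gl⁻¹ g, hgl2, Matrix.one_mul, hg1]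
      rw [hzero, Matrix.mul_zero] at h6
      have h7 := congrFun (congrFun h6 0) 0
      simp [Matrix.one_apply] at h7
    rw [hL, det_reflP, heven.neg_one_pow]
  · -- Part 2
    intro T hTq hdet1
    obtain ⟨L, hL⟩ := CD T hTq
    rw [hL, det_reflP] at hdet1
    have heven : Even L.length := by
      rcases Nat.even_or_odd L.length with he | ho
      · exact he
      · rw [ho.neg_one_pow] at hdet1; norm_num at hdet1
    refine ⟨matP L, isGSp4_matP L, ?_⟩
    intro Y
    rw [hL, reflP_conj, heven.neg_one_pow, one_smul]
  · -- Part 3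
    intro g g' hg hg'
    have hdetg := (Matrix.isUnit_iff_isUnit_det g).1 hg.1
    have hdetg' := (Matrix.isUnit_iff_isUnit_det g').1 hg'.1
    have hg1 : g⁻¹ * g = 1 := Matrix.nonsing_inv_mul g hdetg
    have hg2 : g * g⁻¹ = 1 := Matrix.mul_nonsing_inv g hdetg
    have hg'1 : g'⁻¹ * g' = 1 := Matrix.nonsing_inv_mul g' hdetg'
    have hg'2 : g' * g'⁻¹ = 1 := Matrix.mul_nonsing_inv g' hdetg'
    constructor
    · intro hc
      have hcomm : ∀ Y, memV Y → (g'⁻¹ * g) * Y = Y * (g'⁻¹ * g) := by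
        intro Y hY
        calc (g'⁻¹ * g) * Y
            = g'⁻¹ * (g * Y * g⁻¹) * g := by
              simp only [Matrix.mul_assoc]
              rw [hg1, Matrix.mul_one]
          _ = g'⁻¹ * (g' * Y * g'⁻¹) * g := by rw [hc Y hY]
          _ = Y * (g'⁻¹ * g) := by
              simp only [Matrix.mul_assoc]
              rw [← Matrix.mul_assoc g'⁻¹ g' _, hg'1, Matrix.one_mul]
      have hsc := commutant_scalar _ hcomm
      set lam := (g'⁻¹ * g) 0 0 with hlam_def
      have hlam : lam ≠ 0 := by
        intro h0
        rw [h0, zero_smul] at hsc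
        have h6 : (g⁻¹ * g') * (g'⁻¹ * g) = 1 := by
          simp only [Matrix.mul_assoc]
          rw [← Matrix.mul_assoc g' g'⁻¹ g, hg'2, Matrix.one_mul, hg1]
        rw [hsc, Matrix.mul_zero] at h6
        have h7 := congrFun (congrFun h6 0) 0
        simp [Matrix.one_apply] at h7
      refine ⟨lam⁻¹, inv_ne_zero hlam, ?_⟩
      have h8 : g' * (g'⁻¹ * g) = g := by
        rw [← Matrix.mul_assoc, hg'2, Matrix.one_mul]
      rw [hsc] at h8
      rw [Matrix.mul_smul, Matrix.mul_one] at h8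
      rw [← h8, smul_smul, inv_mul_cancel₀ hlam, one_smul]
    · rintro ⟨lam, hlam, rfl⟩
      intro Y hY
      have hinv : (lam • g)⁻¹ = lam⁻¹ • g⁻¹ := by
        apply Matrix.inv_eq_right_inv
        rw [Matrix.smul_mul, Matrix.mul_smul, hg2, smul_smul, mul_inv_cancel₀ hlam, one_smul]
      rw [hinv, Matrix.smul_mul, Matrix.mul_smul, Matrix.smul_mul, smul_smul,
        inv_mul_cancel₀ hlam, one_smul]

end
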